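/- arXiv:2503.08265 — 2 statements merged into one kernel-verified Lean document; each statement's English description precedes it below -/
import Mathlib

section
/- Let (U,τ) be a topological structure for L with underlying set A. The Gelfand transform f ↦ f̂, where f̂(χ) = χ(f) for χ ∈ bU, is an isometric algebra isomorphism of AP(U) onto C(bU), the algebra of all continuous complex-valued functions on bU with the supremum norm; in particular ‖f̂‖_∞ = ‖f‖_∞ (the supremum over A) for every f ∈ AP(U), and every continuous complex-valued function on bU is the Gelfand transform of some almost periodic function. -/
open FirstOrder UniformFun
open scoped UniformConvergence Topology

/-- Fill the `j`-th coordinate with `a`, the others given by `x`. -/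
def Fill {A : Type*} {n : ℕ} (j : Fin n) (x : {i : Fin n // i ≠ j} → A) (a : A) : Fin n → A :=
  fun i => if h : i = j then a else x ⟨i, h⟩

/-- A simple translation of the structure. -/
def IsSimpleTranslation (L : FirstOrder.Language) (A : Type*) [L.Structure A] (t : A → A) : Prop :=
  ∃ (n : ℕ) (Φ : L.Functions n) (j : Fin n) (x : {i : Fin n // i ≠ j} → A),
    t = fun a => Language.Structure.funMap Φ (Fill j x a)

/-- The translation semigroup `S(U)`: finite compositions of simple translations. -/
inductive IsTranslation (L : FirstOrder.Language) (A : Type*) [L.Structure A] : (A → A) → Prop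
  | simple {t : A → A} : IsSimpleTranslation L A t → IsTranslation L A t
  | comp {s t : A → A} : IsTranslation L A s → IsTranslation L A t → IsTranslation L A (s ∘ t)

/-- A bounded continuous `f : A → ℂ` is almost periodic if for every `n`-ary function symbol `Φ`,
every translation `t ∈ S(U)` and every coordinate `j`, the family of functions
`x ↦ f (t (Φ (x₁, …, a, …, xₙ)))`, indexed by `a ∈ A`, is relatively compact in
`C_∞(A^{n-1})` (with the uniform convergence/supremum topology). -/
def IsAlmostPeriodic (L : FirstOrder.Language) (A : Type*) [TopologicalSpace A] [L.Structure A]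
    (f : A → ℂ) : Prop :=
  Continuous f ∧ (∃ C, ∀ a, ‖f a‖ ≤ C) ∧
    ∀ (n : ℕ) (Φ : L.Functions n) (t : A → A), IsTranslation L A t →
      ∀ j : Fin n,
        IsCompact (closure {u : ({i : Fin n // i ≠ j} → A) →ᵤ ℂ |
          ∃ a : A, u = UniformFun.ofFun fun x => f (t (Language.Structure.funMap Φ (Fill j x a)))})

/-- The almost periodic functions, as a subtype of `A →ᵤ ℂ` (so that the induced topology is
that of uniform convergence, i.e. the supremum norm topology). -/
abbrev APf (L : FirstOrder.Language) (A : Type*) [TopologicalSpace A] [L.Structure A] :=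
  {f : A →ᵤ ℂ // IsAlmostPeriodic L A (UniformFun.toFun f)}

/-- Characters: nonzero continuous multiplicative linear functionals on `AP(U)`. -/
def IsCharacter (L : FirstOrder.Language) (A : Type*) [TopologicalSpace A] [L.Structure A]
    (χ : APf L A → ℂ) : Prop :=
  Continuous χ ∧
  (∀ f g h : APf L A, UniformFun.toFun h.1 = UniformFun.toFun f.1 + UniformFun.toFun g.1 →
      χ h = χ f + χ g) ∧
  (∀ f g h : APf L A, UniformFun.toFun h.1 = UniformFun.toFun f.1 * UniformFun.toFun g.1 →
      χ h = χ f * χ g) ∧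
  (∀ (c : ℂ) (f g : APf L A), UniformFun.toFun g.1 = c • UniformFun.toFun f.1 →
      χ g = c * χ f) ∧
  (∃ f, χ f ≠ 0)

/-- The Gelfand space `bU` of `AP(U)`, with the topology of pointwise convergence
on `AP(U)`. -/
abbrev Bohr (L : FirstOrder.Language) (A : Type*) [TopologicalSpace A] [L.Structure A] :=
  {χ : APf L A → ℂ // IsCharacter L A χ}

lemma isAlmostPeriodic_const (L : FirstOrder.Language) (A : Type*) [TopologicalSpace A]
    [L.Structure A] (c : ℂ) : IsAlmostPeriodic L A fun _ => c := by
  refine ⟨continuous_const, ⟨‖c‖, fun _ => le_rfl⟩, ?_⟩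
  intro n Φ t _ j
  have hsub : {u : ({i : Fin n // i ≠ j} → A) →ᵤ ℂ |
      ∃ a : A, u = UniformFun.ofFun fun _ => c} ⊆ {UniformFun.ofFun fun _ => c} := by
    rintro u ⟨a, rfl⟩; rfl
  exact (isCompact_singleton.closure).of_isClosed_subset isClosed_closure
    (closure_mono hsub)

/-- The evaluation map `δ : A → bU`, `δ(a)(f) = f(a)`. -/
def bohrEval (L : FirstOrder.Language) (A : Type*) [TopologicalSpace A] [L.Structure A]
    [Nonempty A] (a : A) : Bohr L A :=
  ⟨fun f => UniformFun.toFun f.1 a, by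
    refine ⟨?_, ?_, ?_, ?_, ?_⟩
    · exact ((UniformFun.uniformContinuous_eval ℂ a).continuous).comp continuous_subtype_val
    · intro f g h hfg; exact congrFun hfg a
    · intro f g h hfg; exact congrFun hfg a
    · intro cc f g hfg; exact congrFun hfg a
    · exact ⟨⟨UniformFun.ofFun fun _ => 1, isAlmostPeriodic_const L A 1⟩, one_ne_zero⟩⟩


open scoped Uniformity BoundedContinuousFunction

section Nets
variable {ι : Type*}

lemma isCompact_closure_of_nets (s : Set (ι →ᵤ ℂ))
    (h : ∀ ε : ℝ, 0 < ε → ∃ T : Set (ι →ᵤ ℂ), T.Finite ∧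
      ∀ u ∈ s, ∃ t ∈ T, ∀ x, dist (UniformFun.toFun u x) (UniformFun.toFun t x) ≤ ε) :
    IsCompact (closure s) := by
  rw [isCompact_iff_totallyBounded_isComplete]
  refine ⟨TotallyBounded.closure ?_, isClosed_closure.isComplete⟩
  intro d hd
  obtain ⟨ε, hε, hsub⟩ :=
    (UniformFun.hasBasis_uniformity_of_basis ι ℂ Metric.uniformity_basis_dist).mem_iff.mp hd
  obtain ⟨T, hTfin, hT⟩ := h (ε/2) (by positivity)
  refine ⟨T, hTfin, fun u hu => ?_⟩
  obtain ⟨t, htT, hdist⟩ := hT u hu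
  refine Set.mem_iUnion₂.mpr ⟨t, htT, hsub ?_⟩
  intro x
  exact lt_of_le_of_lt (hdist x) (by linarith)

lemma nets_of_isCompact_closure (s : Set (ι →ᵤ ℂ)) (h : IsCompact (closure s)) :
    ∀ ε : ℝ, 0 < ε → ∃ T : Set (ι →ᵤ ℂ), T ⊆ s ∧ T.Finite ∧
      ∀ u ∈ s, ∃ t ∈ T, ∀ x, dist (UniformFun.toFun u x) (UniformFun.toFun t x) ≤ ε := by
  intro ε hε
  have htb : TotallyBounded s := h.totallyBounded.subset subset_closure
  have hmem : UniformFun.gen ι ℂ {p : ℂ × ℂ | dist p.1 p.2 < ε} ∈ 𝓤 (ι →ᵤ ℂ) :=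
    (UniformFun.hasBasis_uniformity_of_basis ι ℂ Metric.uniformity_basis_dist).mem_of_mem hε
  obtain ⟨T, hTs, hTfin, hT⟩ := htb.exists_subset hmem
  refine ⟨T, hTs, hTfin, fun u hu => ?_⟩
  obtain ⟨t, htT, hxy⟩ := Set.mem_iUnion₂.mp (hT hu)
  exact ⟨t, htT, fun x => le_of_lt (hxy x)⟩

lemma nets_comb {κ : Type*} (F G : κ → ι → ℂ) (op : ℂ → ℂ → ℂ) (P Q : Set ℂ)
    (hFP : ∀ k x, F k x ∈ P) (hGQ : ∀ k x, G k x ∈ Q) (M : ℝ) (hM : 0 < M)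
    (hop : ∀ a ∈ P, ∀ a' ∈ P, ∀ b ∈ Q, ∀ b' ∈ Q,
      dist (op a b) (op a' b') ≤ M * (dist a a' + dist b b'))
    (hF : IsCompact (closure {u : ι →ᵤ ℂ | ∃ k, u = UniformFun.ofFun (F k)}))
    (hG : IsCompact (closure {u : ι →ᵤ ℂ | ∃ k, u = UniformFun.ofFun (G k)})) :
    IsCompact (closure {u : ι →ᵤ ℂ | ∃ k,
      u = UniformFun.ofFun fun x => op (F k x) (G k x)}) := by
  apply isCompact_closure_of_nets
  intro ε hε
  obtain ⟨TF, hTFs, hTFfin, hTF⟩ := nets_of_isCompact_closure _ hF (ε/(2*M)) (by positivity)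
  obtain ⟨TG, hTGs, hTGfin, hTG⟩ := nets_of_isCompact_closure _ hG (ε/(2*M)) (by positivity)
  refine ⟨Set.image2 (fun t1 t2 => UniformFun.ofFun fun x =>
      op (UniformFun.toFun t1 x) (UniformFun.toFun t2 x)) TF TG,
    hTFfin.image2 _ hTGfin, ?_⟩
  rintro u ⟨k, rfl⟩
  obtain ⟨t1, ht1T, ht1⟩ := hTF (UniformFun.ofFun (F k)) ⟨k, rfl⟩
  obtain ⟨t2, ht2T, ht2⟩ := hTG (UniformFun.ofFun (G k)) ⟨k, rfl⟩
  obtain ⟨k1, hk1⟩ := hTFs ht1T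
  obtain ⟨k2, hk2⟩ := hTGs ht2T
  refine ⟨_, Set.mem_image2_of_mem ht1T ht2T, fun x => ?_⟩
  simp only [UniformFun.toFun_ofFun]
  have h1 : UniformFun.toFun t1 x ∈ P := by rw [hk1]; exact hFP k1 x
  have h2 : UniformFun.toFun t2 x ∈ Q := by rw [hk2]; exact hGQ k2 x
  have d1 := ht1 x
  have d2 := ht2 x
  simp only [UniformFun.toFun_ofFun] at d1 d2
  calc dist (op (F k x) (G k x)) (op (UniformFun.toFun t1 x) (UniformFun.toFun t2 x))
      ≤ M * (dist (F k x) (UniformFun.toFun t1 x) + dist (G k x) (UniformFun.toFun t2 x)) :=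
        hop _ (hFP k x) _ h1 _ (hGQ k x) _ h2
    _ ≤ M * (ε/(2*M) + ε/(2*M)) := by
        nlinarith [dist_nonneg (x := F k x) (y := UniformFun.toFun t1 x)]
    _ = ε := by field_simp; ring
end Nets

section AP
variable {L : FirstOrder.Language} {A : Type*} [TopologicalSpace A] [L.Structure A]

lemma IsAlmostPeriodic.add' {f g : A → ℂ} (hf : IsAlmostPeriodic L A f)
    (hg : IsAlmostPeriodic L A g) : IsAlmostPeriodic L A (fun a => f a + g a) := by
  obtain ⟨hfc, ⟨Cf, hCf⟩, hfK⟩ := hf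
  obtain ⟨hgc, ⟨Cg, hCg⟩, hgK⟩ := hg
  refine ⟨hfc.add hgc, ⟨Cf + Cg, fun a => (norm_add_le _ _).trans (add_le_add (hCf a) (hCg a))⟩, ?_⟩
  intro n Φ t ht j
  exact nets_comb (fun a x => f (t (Language.Structure.funMap Φ (Fill j x a))))
    (fun a x => g (t (Language.Structure.funMap Φ (Fill j x a)))) (· + ·)
    Set.univ Set.univ (fun _ _ => trivial) (fun _ _ => trivial) 1 one_pos
    (by intro a _ a' _ b _ b' _; simpa using dist_add_add_le a b a' b')
    (hfK n Φ t ht j) (hgK n Φ t ht j)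

lemma IsAlmostPeriodic.mul' {f g : A → ℂ} (hf : IsAlmostPeriodic L A f)
    (hg : IsAlmostPeriodic L A g) : IsAlmostPeriodic L A (fun a => f a * g a) := by
  obtain ⟨hfc, ⟨Cf, hCf⟩, hfK⟩ := hf
  obtain ⟨hgc, ⟨Cg, hCg⟩, hgK⟩ := hg
  refine ⟨hfc.mul hgc, ⟨(Cf + 1) * (Cg + 1), fun a => by
      have h1 := norm_nonneg (f a); have h2 := norm_nonneg (g a)
      have := hCf a; have := hCg a
      rw [norm_mul]; nlinarith⟩, ?_⟩
  intro n Φ t ht j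
  refine nets_comb (fun a x => f (t (Language.Structure.funMap Φ (Fill j x a))))
    (fun a x => g (t (Language.Structure.funMap Φ (Fill j x a)))) (· * ·)
    {z : ℂ | ‖z‖ ≤ Cf} {z : ℂ | ‖z‖ ≤ Cg} (fun k x => hCf _) (fun k x => hCg _)
    (max Cf 0 + max Cg 0 + 1) (by positivity) ?_ (hfK n Φ t ht j) (hgK n Φ t ht j)
  intro a ha a' ha' b hb b' hb'
  simp only [Set.mem_setOf_eq] at ha ha' hb hb'
  have key : dist (a * b) (a' * b') ≤ ‖b‖ * dist a a' + ‖a'‖ * dist b b' := by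
    rw [dist_eq_norm, dist_eq_norm, dist_eq_norm]
    calc ‖a * b - a' * b'‖ = ‖(a - a') * b + a' * (b - b')‖ := by ring_nf
      _ ≤ ‖(a - a') * b‖ + ‖a' * (b - b')‖ := norm_add_le _ _
      _ = ‖b‖ * ‖a - a'‖ + ‖a'‖ * ‖b - b'‖ := by rw [norm_mul, norm_mul]; ring
  refine key.trans ?_
  have hb0 := norm_nonneg b; have ha0 := norm_nonneg a'
  have h1 : ‖b‖ ≤ max Cg 0 := hb.trans (le_max_left _ _)
  have h2 : ‖a'‖ ≤ max Cf 0 := ha'.trans (le_max_left _ _)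
  have d1 := dist_nonneg (x := a) (y := a'); have d2 := dist_nonneg (x := b) (y := b')
  nlinarith

lemma IsAlmostPeriodic.star' {f : A → ℂ} (hf : IsAlmostPeriodic L A f) :
    IsAlmostPeriodic L A (fun a => starRingEnd ℂ (f a)) := by
  obtain ⟨hfc, ⟨Cf, hCf⟩, hfK⟩ := hf
  refine ⟨Complex.continuous_conj.comp hfc, ⟨Cf, fun a => by simpa using hCf a⟩, ?_⟩
  intro n Φ t ht j
  exact nets_comb (fun a x => f (t (Language.Structure.funMap Φ (Fill j x a))))
    (fun a x => f (t (Language.Structure.funMap Φ (Fill j x a))))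
    (fun a _ => starRingEnd ℂ a) Set.univ Set.univ (fun _ _ => trivial) (fun _ _ => trivial)
    1 one_pos
    (by intro a _ a' _ b _ b' _
        rw [Complex.dist_conj_conj]
        nlinarith [dist_nonneg (x := b) (y := b'), dist_nonneg (x := a) (y := a')])
    (hfK n Φ t ht j) (hfK n Φ t ht j)

lemma isClosed_apSet (L : FirstOrder.Language) (A : Type*) [TopologicalSpace A] [L.Structure A] :
    IsClosed {F : A →ᵇ ℂ | IsAlmostPeriodic L A ⇑F} := by
  refine isClosed_of_closure_subset fun F hF => ?_
  refine ⟨F.continuous, ⟨‖F‖, fun a => F.norm_coe_le_norm a⟩, ?_⟩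
  intro n Φ t ht j
  apply isCompact_closure_of_nets
  intro ε hε
  obtain ⟨G, hGmem, hdist⟩ := Metric.mem_closure_iff.mp hF (ε/3) (by positivity)
  obtain ⟨T, _, hTfin, hT⟩ :=
    nets_of_isCompact_closure _ (hGmem.2.2 n Φ t ht j) (ε/3) (by positivity)
  refine ⟨T, hTfin, ?_⟩
  rintro u ⟨a, rfl⟩
  obtain ⟨t0, ht0T, ht0⟩ := hT
    (UniformFun.ofFun fun x => G (t (Language.Structure.funMap Φ (Fill j x a)))) ⟨a, rfl⟩
  refine ⟨t0, ht0T, fun x => ?_⟩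
  simp only [UniformFun.toFun_ofFun] at ht0 ⊢
  have h1 : dist (F (t (Language.Structure.funMap Φ (Fill j x a))))
      (G (t (Language.Structure.funMap Φ (Fill j x a)))) ≤ ε/3 :=
    (BoundedContinuousFunction.dist_coe_le_dist _).trans hdist.le
  calc dist (F (t (Language.Structure.funMap Φ (Fill j x a)))) (UniformFun.toFun t0 x)
      ≤ dist (F (t (Language.Structure.funMap Φ (Fill j x a))))
          (G (t (Language.Structure.funMap Φ (Fill j x a))))
        + dist (G (t (Language.Structure.funMap Φ (Fill j x a)))) (UniformFun.toFun t0 x) :=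
        dist_triangle _ _ _
    _ ≤ ε := by have := ht0 x; linarith

end AP

/-- Almost periodic functions as a star subalgebra of the bounded continuous functions. -/
noncomputable def APalg (L : FirstOrder.Language) (A : Type*) [TopologicalSpace A]
    [L.Structure A] : StarSubalgebra ℂ (A →ᵇ ℂ) where
  carrier := {F | IsAlmostPeriodic L A ⇑F}
  mul_mem' hf hg := hf.mul' hg
  add_mem' hf hg := hf.add' hg
  algebraMap_mem' c := isAlmostPeriodic_const L A c
  star_mem' hf := hf.star'

instance apalg_isClosed (L : FirstOrder.Language) (A : Type*) [TopologicalSpace A]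
    [L.Structure A] : IsClosed ((APalg L A : Set (A →ᵇ ℂ))) := isClosed_apSet L A

section Maps
variable (L : FirstOrder.Language) (A : Type*) [TopologicalSpace A] [L.Structure A]

/-- From an almost periodic function to the corresponding element of `APalg`. -/
noncomputable def toB (f : APf L A) : ↥(APalg L A) :=
  ⟨BoundedContinuousFunction.ofNormedAddCommGroup (UniformFun.toFun f.1) f.2.1
    f.2.2.1.choose f.2.2.1.choose_spec, f.2⟩

/-- From an element of `APalg` to the corresponding almost periodic function. -/
noncomputable def fromB (F : ↥(APalg L A)) : APf L A := ⟨UniformFun.ofFun ⇑F.1, F.2⟩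

variable {L A}

lemma fromB_toB (f : APf L A) : fromB L A (toB L A f) = f := rfl

lemma toB_fromB (F : ↥(APalg L A)) : toB L A (fromB L A F) = F :=
  Subtype.ext (BoundedContinuousFunction.ext fun _ => rfl)

lemma continuous_fromB : Continuous (fromB L A) :=
  Continuous.subtype_mk
    (BoundedContinuousFunction.isInducing_coeFn.continuous.comp continuous_subtype_val) _

lemma continuous_toB : Continuous (toB L A) := by
  refine Continuous.subtype_mk ?_ _
  rw [BoundedContinuousFunction.isInducing_coeFn.continuous_iff]
  exact continuous_subtype_val

/-- A character of `AP(U)` as a character of the C⋆-algebra `APalg`. -/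
noncomputable def toChar (χ : Bohr L A) : WeakDual.characterSpace ℂ ↥(APalg L A) := by
  refine ⟨{ toFun := fun F => χ.1 (fromB L A F)
            map_add' := fun F G => χ.2.2.1 (fromB L A F) (fromB L A G) (fromB L A (F + G)) ?_
            map_smul' := fun c F => ?_
            cont := χ.2.1.comp continuous_fromB }, ?_, fun F G =>
              χ.2.2.2.1 (fromB L A F) (fromB L A G) (fromB L A (F * G)) ?_⟩
  · funext a
    simp [fromB]
  · simpa using χ.2.2.2.2.1 c (fromB L A F) (fromB L A (c • F)) (by funext a; simp [fromB])
  · intro h0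
    obtain ⟨f, hf⟩ := χ.2.2.2.2.2
    exact hf (congrArg (fun ψ : WeakDual ℂ ↥(APalg L A) => ψ (toB L A f)) h0)
  · funext a
    simp [fromB]

lemma toChar_apply (χ : Bohr L A) (F : ↥(APalg L A)) : toChar χ F = χ.1 (fromB L A F) := rfl

set_option maxHeartbeats 1000000 in
/-- A character of the C⋆-algebra `APalg` as a character of `AP(U)`. -/
noncomputable def fromChar (ψ : WeakDual.characterSpace ℂ ↥(APalg L A)) : Bohr L A := by
  refine ⟨fun f => ψ (toB L A f), (map_continuous ψ).comp continuous_toB, ?_, ?_, ?_, ?_⟩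
  · intro f g h hfg
    have : toB L A h = toB L A f + toB L A g := by
      ext a; exact congrFun hfg a
    show ψ (toB L A h) = ψ (toB L A f) + ψ (toB L A g)
    rw [this, map_add]
  · intro f g h hfg
    have : toB L A h = toB L A f * toB L A g := by
      ext a; exact congrFun hfg a
    show ψ (toB L A h) = ψ (toB L A f) * ψ (toB L A g)
    rw [this, map_mul]
  · intro c f g hfg
    have : toB L A g = c • toB L A f := by
      ext a; exact congrFun hfg a
    show ψ (toB L A g) = c * ψ (toB L A f)
    rw [this, map_smul, smul_eq_mul]
  · refine ⟨fromB L A 1, ?_⟩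
    show ψ (toB L A (fromB L A 1)) ≠ 0
    rw [toB_fromB, map_one]
    exact one_ne_zero

lemma fromChar_toChar (χ : Bohr L A) : fromChar (toChar χ) = χ :=
  Subtype.ext (funext fun f => by rw [← fromB_toB f]; rfl)

lemma continuous_fromChar : Continuous (fromChar (L := L) (A := A)) :=
  Continuous.subtype_mk
    (continuous_pi fun f => (WeakDual.eval_continuous (toB L A f)).comp continuous_subtype_val) _
end Maps


/-- The Gelfand transform `f ↦ f̂`, `f̂(χ) = χ(f)`, is an isometric algebra isomorphism of `AP(U)`
onto `C(bU)`: each `f̂` is continuous on `bU`, the transform is additive, multiplicative and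
`ℂ`-homogeneous, norm-preserving (`‖f̂‖_∞ = ‖f‖_∞`), injective, and every continuous complex
function on `bU` is the Gelfand transform of some almost periodic function. -/
theorem gelfandTransform_isometric_iso (L : FirstOrder.Language) (A : Type*)
    [TopologicalSpace A] [L.Structure A] [Nonempty A]
    (hA : ∀ (n : ℕ) (Φ : L.Functions n),
      Continuous fun x : Fin n → A => Language.Structure.funMap Φ x) :
    (∀ f : APf L A, Continuous fun χ : Bohr L A => χ.1 f) ∧
    (∀ f g h : APf L A, UniformFun.toFun h.1 = UniformFun.toFun f.1 + UniformFun.toFun g.1 →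
      ∀ χ : Bohr L A, χ.1 h = χ.1 f + χ.1 g) ∧
    (∀ f g h : APf L A, UniformFun.toFun h.1 = UniformFun.toFun f.1 * UniformFun.toFun g.1 →
      ∀ χ : Bohr L A, χ.1 h = χ.1 f * χ.1 g) ∧
    (∀ (c : ℂ) (f g : APf L A), UniformFun.toFun g.1 = c • UniformFun.toFun f.1 →
      ∀ χ : Bohr L A, χ.1 g = c * χ.1 f) ∧
    (∀ f : APf L A, (⨆ a : A, ‖UniformFun.toFun f.1 a‖) = ⨆ χ : Bohr L A, ‖χ.1 f‖) ∧
    Function.Injective (fun (f : APf L A) => fun χ : Bohr L A => χ.1 f) ∧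
    (∀ g : Bohr L A → ℂ, Continuous g → ∃ f : APf L A, ∀ χ : Bohr L A, χ.1 f = g χ) := by
  haveI : NormOneClass ↥(APalg L A) := ⟨by
    show ‖((1 : ↥(APalg L A)) : A →ᵇ ℂ)‖ = 1
    rw [OneMemClass.coe_one]
    exact norm_one⟩
  haveI : Nonempty (Bohr L A) := ⟨bohrEval L A (Classical.arbitrary A)⟩
  have χnorm : ∀ (χ : Bohr L A) (f : APf L A), ‖χ.1 f‖ ≤ ‖toB L A f‖ := by
    intro χ f
    have h1 : χ.1 f = toChar χ (toB L A f) := by rw [toChar_apply, fromB_toB]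
    rw [h1]
    exact AlgHom.norm_apply_le_self (toChar χ) (toB L A f)
  have hnorm_eq : ∀ f : APf L A, ‖toB L A f‖ = ⨆ a : A, ‖UniformFun.toFun f.1 a‖ := by
    intro f
    show ‖((toB L A f : A →ᵇ ℂ))‖ = _
    rw [BoundedContinuousFunction.norm_eq_iSup_norm]
    rfl
  refine ⟨fun f => (continuous_apply f).comp continuous_subtype_val,
    fun f g h hfg χ => χ.2.2.1 f g h hfg,
    fun f g h hfg χ => χ.2.2.2.1 f g h hfg,
    fun c f g hfg χ => χ.2.2.2.2.1 c f g hfg, ?_, ?_, ?_⟩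
  · intro f
    have hbdd : BddAbove (Set.range fun χ : Bohr L A => ‖χ.1 f‖) :=
      ⟨‖toB L A f‖, by rintro _ ⟨χ, rfl⟩; exact χnorm χ f⟩
    refine le_antisymm (ciSup_le fun a => le_ciSup_of_le hbdd (bohrEval L A a) le_rfl) ?_
    exact ciSup_le fun χ => (χnorm χ f).trans (le_of_eq (hnorm_eq f))
  · intro f g hfg
    refine Subtype.ext ?_
    have : ∀ a, UniformFun.toFun f.1 a = UniformFun.toFun g.1 a :=
      fun a => congrFun hfg (bohrEval L A a)
    exact UniformFun.toFun.injective (funext this)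
  · intro g hg
    let G : C(WeakDual.characterSpace ℂ ↥(APalg L A), ℂ) :=
      ⟨fun ψ => g (fromChar ψ), hg.comp continuous_fromChar⟩
    obtain ⟨F, hF⟩ := (gelfandTransform_bijective (A := ↥(APalg L A))).2 G
    refine ⟨fromB L A F, fun χ => ?_⟩
    calc χ.1 (fromB L A F) = toChar χ F := rfl
      _ = (WeakDual.gelfandTransform ℂ ↥(APalg L A) F) (toChar χ) := by
          rw [WeakDual.gelfandTransform_apply_apply]
      _ = G (toChar χ) := by rw [hF]
      _ = g (fromChar (toChar χ)) := rfl
      _ = g χ := by rw [fromChar_toChar]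
end

section
/- Let (U,τ) be a topological structure for L with underlying set A and let δ : A → bU be the evaluation map. Let K be a compact Hausdorff space carrying an L-structure whose function-symbol interpretations are continuous, and let ρ : A → K be a continuous map with dense image which is a homomorphism: ρ(Φ_U(a_1,…,a_n)) = Φ_K(ρ(a_1),…,ρ(a_n)) for every n-ary function symbol Φ of L and all a_i ∈ A, and ρ(c_U) = c_K for every constant symbol c. Then there exists a continuous map Γ : bU → K with Γ∘δ = ρ. In particular, bU is the maximal compatible compactification of U. -/
open FirstOrder UniformFun
open scoped UniformConvergence Topology

lemma fill_comp {A K : Type*} {n : ℕ} (j : Fin n) (ρ : A → K)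
    (x : {i : Fin n // i ≠ j} → A) (a : A) :
    ρ ∘ Fill j x a = Fill j (fun i => ρ (x i)) (ρ a) := by
  funext i
  simp only [Function.comp_apply, Fill]
  split_ifs with h <;> rfl

lemma continuous_fill {K : Type*} [TopologicalSpace K] {n : ℕ} (j : Fin n)
    (y : {i : Fin n // i ≠ j} → K) : Continuous fun k : K => Fill j y k := by
  refine continuous_pi fun i => ?_
  by_cases h : i = j
  · simp only [Fill, dif_pos h]; exact continuous_id
  · simpa only [Fill, dif_neg h] using continuous_const

lemma continuous_fill2 {K : Type*} [TopologicalSpace K] {n : ℕ} (j : Fin n) :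
    Continuous fun p : ({i : Fin n // i ≠ j} → K) × K => Fill j p.1 p.2 := by
  refine continuous_pi fun i => ?_
  by_cases h : i = j
  · simpa only [Fill, dif_pos h] using continuous_snd
  · simp only [Fill, dif_neg h]; exact (continuous_apply _).comp continuous_fst

lemma translation_lift {L : FirstOrder.Language} {A K : Type*} [TopologicalSpace K]
    [L.Structure A] [L.Structure K]
    (hK : ∀ (n : ℕ) (Φ : L.Functions n),
      Continuous fun x : Fin n → K => Language.Structure.funMap Φ x)
    (ρ : A → K)
    (hρhom : ∀ (n : ℕ) (Φ : L.Functions n) (a : Fin n → A),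
      ρ (Language.Structure.funMap Φ a) = Language.Structure.funMap Φ (ρ ∘ a))
    {t : A → A} (ht : IsTranslation L A t) :
    ∃ t' : K → K, Continuous t' ∧ ∀ a, ρ (t a) = t' (ρ a) := by
  induction ht with
  | simple h =>
    obtain ⟨n, Φ, j, x, rfl⟩ := h
    refine ⟨fun k => Language.Structure.funMap Φ (Fill j (fun i => ρ (x i)) k),
      (hK n Φ).comp (continuous_fill j _), fun a => ?_⟩
    rw [hρhom, fill_comp]
  | comp hs ht ihs iht =>
    obtain ⟨s', hs'c, hs'⟩ := ihs
    obtain ⟨t', ht'c, ht'⟩ := iht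
    exact ⟨s' ∘ t', hs'c.comp ht'c, fun a => by
      simp only [Function.comp_apply, hs', ht']⟩

lemma continuous_ofFun_coe {Y : Type*} [TopologicalSpace Y] [CompactSpace Y] :
    Continuous fun u : C(Y, ℂ) => UniformFun.ofFun ⇑u := by
  rw [continuous_iff_continuousAt]
  intro u
  rw [ContinuousAt, UniformFun.tendsto_iff_tendstoUniformly]
  exact ContinuousMap.tendsto_iff_tendstoUniformly.mp Filter.tendsto_id

lemma isAlmostPeriodic_comp {L : FirstOrder.Language} {A K : Type*}
    [TopologicalSpace A] [L.Structure A]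
    [TopologicalSpace K] [CompactSpace K] [T2Space K] [L.Structure K]
    (hK : ∀ (n : ℕ) (Φ : L.Functions n),
      Continuous fun x : Fin n → K => Language.Structure.funMap Φ x)
    (ρ : A → K) (hρc : Continuous ρ)
    (hρhom : ∀ (n : ℕ) (Φ : L.Functions n) (a : Fin n → A),
      ρ (Language.Structure.funMap Φ a) = Language.Structure.funMap Φ (ρ ∘ a))
    (g : C(K, ℂ)) :
    IsAlmostPeriodic L A fun a => g (ρ a) := by
  refine ⟨g.continuous.comp hρc, ⟨‖g‖, fun a => g.norm_coe_le_norm (ρ a)⟩, ?_⟩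
  intro n Φ t ht j
  obtain ⟨t', ht'c, ht'⟩ := translation_lift hK ρ hρhom ht
  let Fc : C(K × ({i : Fin n // i ≠ j} → K), ℂ) :=
    ⟨fun p => g (t' (Language.Structure.funMap Φ (Fill j p.2 p.1))),
      g.continuous.comp (ht'c.comp ((hK n Φ).comp
        ((continuous_fill2 j).comp (continuous_snd.prodMk continuous_fst))))⟩
  let G : K → (({i : Fin n // i ≠ j} → A) →ᵤ ℂ) := fun k =>
    UniformFun.ofFun fun x => Fc (k, fun i => ρ (x i))
  have hG : Continuous G := by
    exact (UniformFun.precomp_uniformContinuous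
        (f := fun (x : {i : Fin n // i ≠ j} → A) i => ρ (x i))).continuous.comp
      (continuous_ofFun_coe.comp Fc.curry.continuous)
  have hrange : IsCompact (Set.range G) := isCompact_range hG
  have hsub : {u : ({i : Fin n // i ≠ j} → A) →ᵤ ℂ |
      ∃ a : A, u = UniformFun.ofFun fun x =>
        g (ρ (t (Language.Structure.funMap Φ (Fill j x a))))} ⊆ Set.range G := by
    rintro u ⟨a, rfl⟩
    refine ⟨ρ a, ?_⟩
    funext x
    show Fc (ρ a, fun i => ρ (x i)) = g (ρ (t (Language.Structure.funMap Φ (Fill j x a))))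
    rw [ht', hρhom, fill_comp]; rfl
  exact hrange.of_isClosed_subset isClosed_closure (closure_minimal hsub hrange.isClosed)

/-- **Proposition 2.5.** For any compact Hausdorff space `K` carrying an `L`-structure with
continuous function-symbol interpretations, and any continuous homomorphism `ρ : A → K` with dense
image, there is a continuous `Γ : bU → K` with `Γ ∘ δ = ρ`. Hence `bU` is the maximal compatible
compactification of `U`. (In Mathlib, constant symbols are the `0`-ary function symbols, so the
condition `ρ(c_U) = c_K` is the case `n = 0` of the homomorphism condition.) -/
theorem bohr_maximal (L : FirstOrder.Language) (A : Type*)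
    [TopologicalSpace A] [L.Structure A] [Nonempty A]
    (hA : ∀ (n : ℕ) (Φ : L.Functions n),
      Continuous fun x : Fin n → A => Language.Structure.funMap Φ x)
    (K : Type*) [TopologicalSpace K] [CompactSpace K] [T2Space K] [L.Structure K]
    (hK : ∀ (n : ℕ) (Φ : L.Functions n),
      Continuous fun x : Fin n → K => Language.Structure.funMap Φ x)
    (ρ : A → K) (hρc : Continuous ρ) (hρd : DenseRange ρ)
    (hρhom : ∀ (n : ℕ) (Φ : L.Functions n) (a : Fin n → A),
      ρ (Language.Structure.funMap Φ a) = Language.Structure.funMap Φ (ρ ∘ a)) :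
    ∃ Γ : Bohr L A → K, Continuous Γ ∧ Γ ∘ bohrEval L A = ρ := by
  classical
  let ι : C(K, ℂ) → APf L A := fun g =>
    ⟨UniformFun.ofFun fun a => g (ρ a), isAlmostPeriodic_comp hK ρ hρc hρhom g⟩
  have hι_cont : Continuous ι := by
    refine Continuous.subtype_mk ?_ _
    exact (UniformFun.precomp_uniformContinuous (f := ρ)).continuous.comp continuous_ofFun_coe
  have hone : ∀ χ : Bohr L A, χ.1 (ι 1) = 1 := by
    rintro ⟨χ, hc, hadd, hmul, hsmul, f, hf⟩
    have h := hmul f (ι 1) f (by funext a; simp [ι])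
    have h2 : χ f * 1 = χ f * χ (ι 1) := by rw [mul_one, ← h]
    exact (mul_left_cancel₀ hf h2).symm
  let Φχ : Bohr L A → WeakDual ℂ C(K, ℂ) := fun χ =>
    { toFun := fun g => χ.1 (ι g)
      map_add' := fun g g' => χ.2.2.1 (ι g) (ι g') (ι (g + g')) (by funext a; simp [ι])
      map_smul' := fun c g => by
        simpa using χ.2.2.2.2.1 c (ι g) (ι (c • g)) (by funext a; simp [ι])
      cont := χ.2.1.comp hι_cont }
  have hΦmem : ∀ χ, Φχ χ ∈ WeakDual.characterSpace ℂ C(K, ℂ) := by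
    intro χ
    refine ⟨fun h0 => ?_, fun g g' => χ.2.2.2.1 (ι g) (ι g') (ι (g * g')) (by funext a; simp [ι])⟩
    have h1 : (Φχ χ) 1 = 1 := hone χ
    rw [h0] at h1
    exact one_ne_zero (h1.symm.trans rfl)
  refine ⟨fun χ => (WeakDual.CharacterSpace.homeoEval K ℂ).symm ⟨Φχ χ, hΦmem χ⟩, ?_, ?_⟩
  · exact (WeakDual.CharacterSpace.homeoEval K ℂ).symm.continuous.comp
      (Continuous.subtype_mk (WeakDual.continuous_of_continuous_eval fun g =>
        (continuous_apply (ι g)).comp continuous_subtype_val) _)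
  · funext a
    show (WeakDual.CharacterSpace.homeoEval K ℂ).symm ⟨Φχ (bohrEval L A a), hΦmem _⟩ = ρ a
    have he : (⟨Φχ (bohrEval L A a), hΦmem _⟩ :
        WeakDual.characterSpace ℂ C(K, ℂ)) = WeakDual.CharacterSpace.homeoEval K ℂ (ρ a) :=
      Subtype.ext (ContinuousLinearMap.ext fun g => rfl)
    rw [he]
    exact Homeomorph.symm_apply_apply _ _
end
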